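/- In the Schachermayer example with claim weights ω̄_2 = V^- (the negative part of V): ᾱ_2 := E[ω̄_2 ΔS_2 | F_1] = U^2 - 1, η̄_2 := E[ω̄_2 H̄_2 ΔS_2 | F_1] = 0 where H̄_2 = (1/U+1)V^+, and δ̄_2 := E[ω̄_2 ΔS_2^2 | F_1] = 1 - U^2, so β̄_2 = -1 and ρ̄_2 = 0, and the resulting optimal strategy ξ̄*_1 = 1 - c, ξ̄*_2 = c satisfies ξ̄*_2 ΔS_2 ∈ L^2(P). -/

import Mathlib

open MeasureTheory

/-- The σ-algebra generated by `U = Prod.fst` on `Ω = ℝ × ℝ`. -/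
def sigmaU : MeasurableSpace (ℝ × ℝ) :=
  MeasurableSpace.comap (Prod.fst : ℝ × ℝ → ℝ) inferInstance

/-- Schachermayer's example with weight `ω̄₂ = V⁻` and claim `H̄₂ = (1/U + 1) V⁺`:
`ᾱ₂ = E[ω̄₂ ΔS₂ | F₁] = U² - 1`, `η̄₂ = E[ω̄₂ H̄₂ ΔS₂ | F₁] = 0`,
`δ̄₂ = E[ω̄₂ ΔS₂² | F₁] = 1 - U²`, so `β̄₂ = ᾱ₂/δ̄₂ = -1` and `ρ̄₂ = η̄₂/δ̄₂ = 0`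
(wherever `δ̄₂ ≠ 0`), and the resulting optimal strategy `ξ̄*₁ = 1 - c`, `ξ̄*₂ = c`
satisfies `ξ̄*₂ ΔS₂ ∈ L²(P)`. -/
theorem stmt_15 (μ : Measure (ℝ × ℝ)) [IsProbabilityMeasure μ]
    (hU : μ.map Prod.fst = volume.restrict (Set.Icc (0 : ℝ) 1))
    (hV : ∀ᵐ x ∂μ, x.2 = 1 ∨ x.2 = -1)
    (hcond : μ[(fun x : ℝ × ℝ => if x.2 = 1 then (1 : ℝ) else 0) | sigmaU]
      =ᵐ[μ] fun x => x.1 ^ 2)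
    (ΔS2 wbar2 Hbar2 : ℝ × ℝ → ℝ)
    (hΔS2 : ∀ x, ΔS2 x = max x.2 0 * (1 + x.1) - 1)
    (hw2 : ∀ x, wbar2 x = max (-x.2) 0)
    (hH2 : ∀ x, Hbar2 x = (1 / x.1 + 1) * max x.2 0)
    (c : ℝ) :
    (μ[fun x => wbar2 x * ΔS2 x | sigmaU] =ᵐ[μ] fun x => x.1 ^ 2 - 1) ∧
    (μ[fun x => wbar2 x * Hbar2 x * ΔS2 x | sigmaU] =ᵐ[μ] 0) ∧
    (μ[fun x => wbar2 x * ΔS2 x ^ 2 | sigmaU] =ᵐ[μ] fun x => 1 - x.1 ^ 2) ∧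
    ((fun x => (μ[fun y => wbar2 y * ΔS2 y | sigmaU]) x
        / (μ[fun y => wbar2 y * ΔS2 y ^ 2 | sigmaU]) x) =ᵐ[μ] fun _ => (-1 : ℝ)) ∧
    ((fun x => (μ[fun y => wbar2 y * Hbar2 y * ΔS2 y | sigmaU]) x
        / (μ[fun y => wbar2 y * ΔS2 y ^ 2 | sigmaU]) x) =ᵐ[μ] fun _ => (0 : ℝ)) ∧
    MemLp (fun x => c * ΔS2 x) 2 μ := by
  have hm : sigmaU ≤ (Prod.instMeasurableSpace : MeasurableSpace (ℝ × ℝ)) :=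
    measurable_fst.comap_le
  set I : ℝ × ℝ → ℝ := fun x => if x.2 = 1 then (1 : ℝ) else 0 with hIdef
  have hImeas : Measurable I := by
    apply Measurable.ite _ measurable_const measurable_const
    show MeasurableSet (Prod.snd ⁻¹' ({1} : Set ℝ))
    exact measurable_snd (measurableSet_singleton (1:ℝ))
  have hIint : Integrable I μ := by
    refine (integrable_const (1:ℝ) : Integrable _ μ).mono'
      hImeas.aestronglyMeasurable ?_
    filter_upwards with x
    simp only [hIdef]; split <;> simp
  -- first condexp
  have h1 : (fun x => wbar2 x * ΔS2 x) =ᵐ[μ] fun x => I x - 1 := by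
    filter_upwards [hV] with x hx
    rcases hx with h | h <;> simp [hw2, hΔS2, hIdef, h] <;> norm_num
  have hα : μ[fun x => wbar2 x * ΔS2 x | sigmaU] =ᵐ[μ] fun x => x.1 ^ 2 - 1 := by
    refine (condExp_congr_ae h1).trans ?_
    have he : (fun x : ℝ × ℝ => I x - 1) = I - (fun _ => (1:ℝ)) := rfl
    rw [he]
    refine (condExp_sub hIint (integrable_const 1) sigmaU).trans ?_
    have hc : μ[(fun _ : ℝ × ℝ => (1:ℝ)) | sigmaU] = fun _ => (1:ℝ) :=
      condExp_const (μ := μ) hm (1:ℝ)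
    filter_upwards [hcond] with x hx
    simp [Pi.sub_apply, hc, hx]
  -- second
  have h2 : (fun x => wbar2 x * Hbar2 x * ΔS2 x) =ᵐ[μ] (0 : ℝ × ℝ → ℝ) := by
    filter_upwards [hV] with x hx
    rcases hx with h | h <;> simp [hw2, hH2, h] <;> norm_num
  have hη : μ[fun x => wbar2 x * Hbar2 x * ΔS2 x | sigmaU] =ᵐ[μ] 0 := by
    refine (condExp_congr_ae h2).trans ?_
    rw [condExp_zero]
  -- third
  have h3 : (fun x => wbar2 x * ΔS2 x ^ 2) =ᵐ[μ] fun x => 1 - I x := by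
    filter_upwards [hV] with x hx
    rcases hx with h | h <;> simp [hw2, hΔS2, hIdef, h] <;> norm_num
  have hδ : μ[fun x => wbar2 x * ΔS2 x ^ 2 | sigmaU] =ᵐ[μ] fun x => 1 - x.1 ^ 2 := by
    refine (condExp_congr_ae h3).trans ?_
    have he : (fun x : ℝ × ℝ => 1 - I x) = (fun _ => (1:ℝ)) - I := rfl
    rw [he]
    refine (condExp_sub (integrable_const 1) hIint sigmaU).trans ?_
    have hc : μ[(fun _ : ℝ × ℝ => (1:ℝ)) | sigmaU] = fun _ => (1:ℝ) :=
      condExp_const (μ := μ) hm (1:ℝ)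
    filter_upwards [hcond] with x hx
    simp [Pi.sub_apply, hc, hx]
  -- a.e. facts about U
  have hIcc : ∀ᵐ x ∂μ, x.1 ∈ Set.Icc (0:ℝ) 1 := by
    have h0 : μ (Prod.fst ⁻¹' (Set.Icc (0:ℝ) 1)ᶜ) = 0 := by
      rw [← Measure.map_apply measurable_fst measurableSet_Icc.compl, hU,
        Measure.restrict_apply measurableSet_Icc.compl]
      simp
    exact h0
  have hne1 : ∀ᵐ x ∂μ, x.1 ≠ 1 := by
    have h0 : μ (Prod.fst ⁻¹' {(1:ℝ)}) = 0 := by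
      rw [← Measure.map_apply measurable_fst (measurableSet_singleton 1), hU,
        Measure.restrict_apply (measurableSet_singleton 1)]
      exact measure_mono_null Set.inter_subset_left (measure_singleton 1)
    rw [ae_iff]
    refine measure_mono_null ?_ h0
    intro x hx
    simpa using not_not.mp hx
  refine ⟨hα, hη, hδ, ?_, ?_, ?_⟩
  · filter_upwards [hα, hδ, hIcc, hne1] with x h1 h2 h3 h4
    rw [h1, h2]
    have hx1 : x.1 ^ 2 ≠ 1 := by
      intro h
      have hlt : x.1 < 1 := lt_of_le_of_ne h3.2 h4
      nlinarith [h3.1]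
    rw [div_eq_iff (by intro h; exact hx1 (by linarith))]
    ring
  · filter_upwards [hη] with x h1
    simp [h1]
  · refine MemLp.of_bound ?_ |c| ?_
    · have he : (fun x => c * ΔS2 x) = fun x : ℝ × ℝ =>
        c * (max x.2 0 * (1 + x.1) - 1) := by
        funext x; rw [hΔS2]
      rw [he]
      exact (measurable_const.mul ((measurable_snd.max measurable_const).mul
        (measurable_const.add measurable_fst) |>.sub measurable_const)).aestronglyMeasurable
    · filter_upwards [hV, hIcc] with x hx hx1
      rw [hΔS2, Real.norm_eq_abs, abs_mul]
      have : |max x.2 0 * (1 + x.1) - 1| ≤ 1 := by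
        rcases hx with h | h <;> rw [h] <;> simp [abs_le] <;>
          constructor <;> nlinarith [hx1.1, hx1.2]
      calc |c| * |max x.2 0 * (1 + x.1) - 1| ≤ |c| * 1 :=
            mul_le_mul_of_nonneg_left this (abs_nonneg c)
        _ = |c| := mul_one _
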